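/- The semigroup F generated by the automaton I satisfies the identity g⁶ = g⁴: for every g ∈ F, g⁶ = g⁴ as transformations of {0,1}*. -/

import Mathlib

/-- The transformation of `{0,1}*` given by the state `s` of the automaton `I`:
it flips the first letter (`φ(s) = ⟨e,e⟩σ`).  Letters: `false = 0`, `true = 1`. -/
def sAct : List Bool → List Bool
  | [] => []
  | a :: w => (!a) :: w

/-- The transformation of `{0,1}*` given by the state `f` of the automaton `I`
(`φ(f) = ⟨s,f⟩ζ`): `0w ↦ 0·w^s` and `1w ↦ 0·w^f`. -/
def fAct : List Bool → List Bool
  | [] => []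
  | false :: w => false :: sAct w
  | true :: w => false :: fAct w

/-- The elements `f_n` of the semigroup: `f₁ = s`, `f₂ = f`,
`f_n = f_{n-2} f_{n-1}` (products written left-to-right). -/
def fA : ℕ → List Bool → List Bool
  | 0 => id
  | 1 => sAct
  | 2 => fAct
  | (n + 3) => fun w => fA (n + 2) (fA (n + 1) w)

/-- The left-to-right product `f_{i₁} f_{i₂} ⋯ f_{i_k}` of the elements `f_i`
along a list of indices. -/
def prodL (l : List ℕ) (w : List Bool) : List Bool :=
  l.foldl (fun v i => fA i v) w

/-- Membership in the semigroup `F` generated by `s` and `f`: `g` is a nonempty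
product of the generators (`false` stands for the generator `s`, `true` for `f`;
products are written left-to-right). -/
def inF (g : List Bool → List Bool) : Prop :=
  ∃ u : List Bool, u ≠ [] ∧
    (fun w => u.foldl (fun v a => if a then fAct v else sAct v) w) = g

/- ------------------------------------------------------------------ -/
/- Auxiliary development.                                             -/
/- ------------------------------------------------------------------ -/

/-- Evaluation of a word over the generators (`false = s`, `true = f`),
applied left-to-right. -/
def ev (u : List Bool) : List Bool → List Bool :=
  fun w => u.foldl (fun v a => if a then fAct v else sAct v) w

/-- The output letter: first letter of `ev u (a :: w)`. -/
def outL : List Bool → Bool → Bool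
  | [], a => a
  | true :: u, _ => outL u false
  | false :: u, a => outL u (!a)

/-- The section: the word acting on the tail. -/
def secL : List Bool → Bool → List Bool
  | [], _ => []
  | true :: u, a => a :: secL u false
  | false :: u, a => secL u (!a)

lemma ev_nil (w : List Bool) : ev [] w = w := rfl

lemma ev_cons (x : Bool) (u : List Bool) (w : List Bool) :
    ev (x :: u) w = ev u (if x then fAct w else sAct w) := rfl

lemma sAct_cons (a : Bool) (w : List Bool) : sAct (a :: w) = (!a) :: w := rfl

lemma fAct_cons (a : Bool) (w : List Bool) :
    fAct (a :: w) = false :: (if a then fAct w else sAct w) := by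
  cases a <;> rfl

lemma sAct_sAct (w : List Bool) : sAct (sAct w) = w := by
  cases w with
  | nil => rfl
  | cons a w => simp [sAct]

/-- The master unfolding lemma. -/
lemma ev_head_tail : ∀ (u : List Bool) (a : Bool) (w : List Bool),
    ev u (a :: w) = outL u a :: ev (secL u a) w := by
  intro u
  induction u with
  | nil => intro a w; rfl
  | cons x u ih =>
    intro a w
    cases x with
    | false =>
      show ev u ((!a) :: w) = outL u (!a) :: ev (secL u (!a)) w
      exact ih (!a) w
    | true =>
      show ev u (fAct (a :: w)) = outL u false :: ev (a :: secL u false) w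
      rw [fAct_cons, ih false (if a then fAct w else sAct w)]
      rfl

lemma ev_empty : ∀ (u : List Bool), ev u [] = [] := by
  intro u
  induction u with
  | nil => rfl
  | cons x u ih =>
    rw [ev_cons]
    cases x <;> simpa [sAct, fAct] using ih

lemma iter_ev_empty (u : List Bool) : ∀ (m : ℕ), (ev u)^[m] [] = [] := by
  intro m
  induction m with
  | zero => rfl
  | succ m ih => rw [Function.iterate_succ_apply, ev_empty]; exact ih

lemma outL_append : ∀ (u v : List Bool) (a : Bool),
    outL (u ++ v) a = outL v (outL u a) := by
  intro u
  induction u with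
  | nil => intro v a; rfl
  | cons x u ih => intro v a; cases x <;> simp [outL, ih]

lemma secL_append : ∀ (u v : List Bool) (a : Bool),
    secL (u ++ v) a = secL u a ++ secL v (outL u a) := by
  intro u
  induction u with
  | nil => intro v a; rfl
  | cons x u ih => intro v a; cases x <;> simp [secL, outL, ih]

/-- For a word containing `f`, the output is a constant and the
sections at the two letters share their tail. -/
lemma shared_tail : ∀ (t : List Bool), true ∈ t →
    ∃ (ε b : Bool) (r : List Bool),
      (∀ e, secL t e = (xor e ε) :: r) ∧ (∀ e, outL t e = b) := by
  intro t
  induction t with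
  | nil => intro h; cases h
  | cons x t ih =>
    intro h
    cases x with
    | true =>
      refine ⟨false, outL t false, secL t false, fun e => ?_, fun e => rfl⟩
      simp [secL]
    | false =>
      have ht : true ∈ t := by simpa using h
      obtain ⟨ε, b, r, h1, h2⟩ := ih ht
      refine ⟨!ε, b, r, fun e => ?_, fun e => h2 (!e)⟩
      show secL t (!e) = (xor e !ε) :: r
      rw [h1 (!e)]
      have : xor (!e) ε = xor e (!ε) := by cases e <;> cases ε <;> rfl
      rw [this]

lemma secL_pure : ∀ (t : List Bool), true ∉ t → ∀ a, secL t a = [] := by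
  intro t
  induction t with
  | nil => intro _ a; rfl
  | cons x t ih =>
    intro h a
    cases x with
    | true => exact absurd List.mem_cons_self h
    | false =>
      have : true ∉ t := fun ht => h (List.mem_cons_of_mem _ ht)
      exact ih this (!a)

lemma outL_pure_xor : ∀ (t : List Bool), true ∉ t →
    ∀ a, outL t a = xor a (outL t false) := by
  intro t
  induction t with
  | nil => intro _ a; cases a <;> rfl
  | cons x t ih =>
    intro h a
    cases x with
    | true => exact absurd List.mem_cons_self h
    | false =>
      have ht : true ∉ t := fun hh => h (List.mem_cons_of_mem _ hh)
      show outL t (!a) = xor a (outL t (!false))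
      rw [ih ht (!a), ih ht (!false)]
      cases a <;> cases outL t false <;> rfl

/-- A word with no `f` is an involution. -/
lemma ev_pure_invol (u : List Bool) (hu : true ∉ u) :
    ∀ z, ev u (ev u z) = z := by
  intro z
  cases z with
  | nil => rw [ev_empty, ev_empty]
  | cons a w =>
    have e1 : ∀ b, ev u (b :: w) = outL u b :: w := fun b => by
      rw [ev_head_tail, secL_pure u hu, ev_nil]
    rw [e1 a, e1 (outL u a), outL_pure_xor u hu (outL u a), outL_pure_xor u hu a]
    cases a <;> cases outL u false <;> rfl

lemma iter_period_two {α : Type*} (f : α → α) (h : ∀ z, f (f z) = z) :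
    ∀ (n : ℕ) (z : α), f^[n + 2] z = f^[n] z := by
  intro n z
  rw [Function.iterate_succ_apply', Function.iterate_succ_apply', h]

/-- Iterating a constant-output word on a word starting with the output. -/
lemma iter_cons (x : List Bool) (b : Bool) (hb : ∀ e, outL x e = b) :
    ∀ (m : ℕ) (η : List Bool),
      (ev x)^[m] (b :: η) = b :: (ev (secL x b))^[m] η := by
  intro m
  induction m with
  | zero => intro η; rfl
  | succ m ih =>
    intro η
    rw [Function.iterate_succ_apply, ev_head_tail, hb b, ih,
      Function.iterate_succ_apply]

lemma iter_cons' (x : List Bool) (b : Bool) (hb : ∀ e, outL x e = b)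
    (m : ℕ) (d : Bool) (ζ : List Bool) :
    (ev x)^[m + 1] (d :: ζ) = b :: (ev (secL x b))^[m] (ev (secL x d) ζ) := by
  rw [Function.iterate_succ_apply, ev_head_tail, hb d, iter_cons x b hb]

/-- `f³ = f`. -/
lemma fAct_three (w : List Bool) : fAct (fAct (fAct w)) = fAct w := by
  cases w with
  | nil => rfl
  | cons a w =>
    cases a with
    | false =>
      show fAct (fAct (false :: sAct w)) = false :: sAct w
      show fAct (false :: sAct (sAct w)) = false :: sAct w
      rw [sAct_sAct]
      rfl
    | true =>
      show fAct (fAct (false :: fAct w)) = false :: fAct w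
      show fAct (false :: sAct (fAct w)) = false :: fAct w
      show false :: sAct (sAct (fAct w)) = false :: fAct w
      rw [sAct_sAct]

/-- `fsfsfsf = fsf`. -/
lemma r3fun (z : List Bool) :
    fAct (sAct (fAct (sAct (fAct (sAct (fAct z)))))) = fAct (sAct (fAct z)) := by
  cases z with
  | nil => rfl
  | cons a z =>
    rw [fAct_cons]
    set G := if a then fAct z else sAct z with hG
    show fAct (sAct (fAct (sAct (fAct (true :: G))))) = fAct (true :: G)
    show fAct (sAct (fAct (sAct (false :: fAct G)))) = false :: fAct G
    show fAct (sAct (fAct (true :: fAct G))) = false :: fAct G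
    show fAct (sAct (false :: fAct (fAct G))) = false :: fAct G
    show fAct (true :: fAct (fAct G)) = false :: fAct G
    show false :: fAct (fAct (fAct G)) = false :: fAct G
    rw [fAct_three]

/-- The finite closed set of prefixes. -/
def Spre : List (List Bool) :=
  [[false], [true],
   [false, false], [false, true], [true, false], [true, true],
   [false, false, false], [false, false, true], [false, true, false],
   [false, true, true], [true, false, false], [true, false, true],
   [true, true, false], [true, true, true],
   [false, false, false, false], [false, false, false, true],
   [true, false, false, false], [true, false, false, true]]

/-- Possible sections of elements of `Spre`. -/
def Tsec : List (List Bool) :=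
  [[], [false], [true], [false, false], [false, true], [true, false],
   [true, true], [false, false, false], [true, false, false]]

lemma Spre_closed : ∀ p ∈ Spre, ∀ (a c : Bool), secL p a ++ [c] ∈ Spre := by
  decide

lemma Spre_sec : ∀ p ∈ Spre, ∀ (c : Bool), secL p c ∈ Tsec := by
  decide

/-- `f⁴ = f²`. -/
lemma fAct_four (y : List Bool) : fAct (fAct (fAct (fAct y))) = fAct (fAct y) :=
  fAct_three (fAct y)

/-- `x⁴ = x²` for the tiny words in `Tsec`. -/
lemma four_two : ∀ v ∈ Tsec, ∀ z, (ev v)^[4] z = (ev v)^[2] z := by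
  intro v hv z
  fin_cases hv
  · rfl
  · -- [false] : s
    exact iter_period_two (ev [false]) (ev_pure_invol [false] (by decide)) 2 z
  · -- [true] : f
    show fAct (fAct (fAct (fAct z))) = fAct (fAct z)
    exact fAct_four z
  · -- [false, false] : ss
    exact iter_period_two (ev [false, false])
      (ev_pure_invol [false, false] (by decide)) 2 z
  · -- [false, true] : s then f
    show fAct (sAct (fAct (sAct (fAct (sAct (fAct (sAct z))))))) =
      fAct (sAct (fAct (sAct z)))
    exact r3fun (sAct z)
  · -- [true, false] : f then s
    show sAct (fAct (sAct (fAct (sAct (fAct (sAct (fAct z))))))) =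
      sAct (fAct (sAct (fAct z)))
    rw [r3fun z]
  · -- [true, true] : ff
    show fAct (fAct (fAct (fAct (fAct (fAct (fAct (fAct z))))))) =
      fAct (fAct (fAct (fAct z)))
    rw [fAct_four, fAct_four]
  · -- [false, false, false] : sss
    exact iter_period_two (ev [false, false, false])
      (ev_pure_invol [false, false, false] (by decide)) 2 z
  · -- [true, false, false] : f s s  (acts as f)
    show sAct (sAct (fAct (sAct (sAct (fAct (sAct (sAct (fAct (sAct
      (sAct (fAct z))))))))))) = sAct (sAct (fAct (sAct (sAct (fAct z)))))
    simp only [sAct_sAct]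
    exact fAct_four z

/-- The main lemma: the pair identity `x⁵∘y = x³∘y` for words `x = p·t`,
`y = q·t` with short prefixes sharing the tail `t`. -/
lemma main_lemma : ∀ (w p q t : List Bool), p ∈ Spre → q ∈ Spre →
    (ev (p ++ t))^[5] (ev (q ++ t) w) = (ev (p ++ t))^[3] (ev (q ++ t) w) := by
  intro w
  induction w with
  | nil =>
    intro p q t _ _
    rw [ev_empty, iter_ev_empty, iter_ev_empty]
  | cons a w ih =>
    intro p q t hp hq
    by_cases ht : true ∈ t
    · -- the tail contains `f`
      obtain ⟨ε, b, r, hsec, hout⟩ := shared_tail t ht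
      have houtx : ∀ e, outL (p ++ t) e = b := fun e => by
        rw [outL_append, hout]
      have hsecx : ∀ e, secL (p ++ t) e
          = (secL p e ++ [xor (outL p e) ε]) ++ r := fun e => by
        rw [secL_append, hsec, List.append_assoc]; rfl
      have hq1 : ev (q ++ t) (a :: w)
          = b :: ev ((secL q a ++ [xor (outL q a) ε]) ++ r) w := by
        rw [ev_head_tail, outL_append, hout, secL_append, hsec,
          List.append_assoc]
        rfl
      rw [hq1, iter_cons _ b houtx, iter_cons _ b houtx, hsecx b]
      exact congrArg _ (ih _ _ r (Spre_closed p hp b _) (Spre_closed q hq a _))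
    · -- the tail is a power of `s`
      have hsect : ∀ e, secL t e = [] := secL_pure t ht
      by_cases hpf : true ∈ p
      · obtain ⟨εp, bp, rp, hsecp, houtp⟩ := shared_tail p hpf
        have houtx : ∀ e, outL (p ++ t) e = outL t bp := fun e => by
          rw [outL_append, houtp]
        have hsecx : ∀ e, secL (p ++ t) e = secL p e := fun e => by
          rw [secL_append, hsect, List.append_nil]
        have hq1 : ev (q ++ t) (a :: w)
            = outL t (outL q a) :: ev (secL q a) w := by
          rw [ev_head_tail, outL_append, secL_append, hsect, List.append_nil]
        rw [hq1,
          show (5 : ℕ) = 4 + 1 from rfl, iter_cons' _ _ houtx,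
          show (3 : ℕ) = 2 + 1 from rfl, iter_cons' _ _ houtx,
          hsecx, hsecx]
        exact congrArg _ (four_two _ (Spre_sec p hp _) _)
      · -- both pure: the whole word is an involution
        have hx : true ∉ p ++ t := by
          intro hm
          rcases List.mem_append.1 hm with h | h
          · exact hpf h
          · exact ht h
        have h2 := ev_pure_invol (p ++ t) hx
        rw [show (5 : ℕ) = 3 + 2 from rfl, iter_period_two _ h2]

/-- The semigroup `F` satisfies the identity `g⁶ = g⁴`: for every `g ∈ F`,
`g⁶ = g⁴` as transformations of `{0,1}*`. -/
theorem F_identity (g : List Bool → List Bool) (hg : inF g) :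
    ∀ w : List Bool, g^[6] w = g^[4] w := by
  obtain ⟨u, -, hgu⟩ := hg
  subst hgu
  intro w
  show (ev u)^[6] w = (ev u)^[4] w
  by_cases hu : true ∈ u
  · cases w with
    | nil => rw [iter_ev_empty, iter_ev_empty]
    | cons a w =>
      obtain ⟨ε, b, r, hsec, hout⟩ := shared_tail u hu
      have h1 : ev u (a :: w) = b :: ev ([xor a ε] ++ r) w := by
        rw [ev_head_tail, hout, hsec]; rfl
      rw [show (6 : ℕ) = 5 + 1 from rfl, show (4 : ℕ) = 3 + 1 from rfl,
        Function.iterate_succ_apply (ev u) 5 (a :: w),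
        Function.iterate_succ_apply (ev u) 3 (a :: w), h1,
        iter_cons u b hout, iter_cons u b hout, hsec b,
        show ((xor b ε) :: r) = [xor b ε] ++ r from rfl]
      exact congrArg _ (main_lemma w [xor b ε] [xor a ε] r
        (by cases b <;> cases ε <;> decide) (by cases a <;> cases ε <;> decide))
  · exact iter_period_two (ev u) (ev_pure_invol u hu) 4 w
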